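/- Let m, n ∈ ℕ, k = m+n. For A ∈ M_{m,n}(ℝ) let Λ_A = {(Aq + p, q) : p ∈ ℤ^m, q ∈ ℤ^n} ⊂ ℝ^k. For v ∈ ℝ^k write v^(m) for the first m coordinates and v_(n) for the last n, and let ‖·‖ be the sup norm. Let ψ : [x₀,∞) → (0,∞) be non-increasing continuous and r : [t₀,∞) → ℝ the function from the Dani correspondence (so λ(t) = t − nr(t) is strictly increasing to ∞, L(t) = t + mr(t) is non-decreasing, and ψ(e^{t−nr(t)}) = e^{−t−mr(t)}). Let f_t = diag(e^{t/m},…,e^{t/m}, e^{−t/n},…,e^{−t/n}) (m entries e^{t/m}, n entries e^{−t/n}), and for a lattice Λ ⊂ ℝ^k set Δ(Λ) = max_{v ∈ Λ∖{0}} log(1/‖v‖). Then a unimodular lattice Λ ⊂ ℝ^k has vectors v ∈ Λ with arbitrarily large ‖v_(n)‖ satisfying ‖v^(m)‖^m ≤ ψ(‖v_(n)‖^n) if and only if there exist arbitrarily large t > 0 with Δ(f_t Λ) ≥ r(t). -/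

import Mathlib

open Filter Set MeasureTheory
open scoped ENNReal

section DaniAux

lemma unit_det {k : ℕ} (g : Matrix (Fin k) (Fin k) ℝ) (hg : |g.det| = 1) : IsUnit g.det := by
  rcases abs_eq (zero_le_one) |>.mp hg with h | h
  · exact IsUnit.of_mul_eq_one 1 (by rw [h]; ring)
  · exact IsUnit.of_mul_eq_one (-1) (by rw [h]; ring)

lemma lat_finite (k : ℕ) (g : Matrix (Fin k) (Fin k) ℝ) (hdet : IsUnit g.det) (C : ℝ) :
    {v : Fin k → ℝ | (∃ p : Fin k → ℤ, v = g.mulVec fun i => (p i : ℝ)) ∧ ‖v‖ ≤ C}.Finite := by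
  classical
  set h := g⁻¹ with hh
  set M : ℝ := (∑ i, ∑ j, |h i j|) * (max C 0) with hM
  have key : ∀ v ∈ {v : Fin k → ℝ | (∃ p : Fin k → ℤ, v = g.mulVec fun i => (p i : ℝ)) ∧ ‖v‖ ≤ C},
      ∃ p : Fin k → ℤ, (∀ i, |p i| ≤ ⌈M⌉) ∧ v = g.mulVec fun i => (p i : ℝ) := by
    rintro v ⟨⟨p, rfl⟩, hvC⟩
    refine ⟨p, fun i => ?_, rfl⟩
    have hpc : (fun i => (p i : ℝ)) = h.mulVec (g.mulVec fun i => (p i : ℝ)) := by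
      rw [Matrix.mulVec_mulVec, hh, Matrix.nonsing_inv_mul g hdet, Matrix.one_mulVec]
    have h1 : |(p i : ℝ)| ≤ M := by
      have hci := congrFun hpc i
      rw [hci]
      calc |(h.mulVec (g.mulVec fun i => (p i : ℝ))) i|
          ≤ ∑ j, |h i j| * |(g.mulVec fun i => (p i : ℝ)) j| := by
            rw [Matrix.mulVec, dotProduct]
            refine (Finset.abs_sum_le_sum_abs _ _).trans ?_
            exact Finset.sum_le_sum fun j _ => le_of_eq (abs_mul _ _)
        _ ≤ ∑ j, |h i j| * (max C 0) := by
            refine Finset.sum_le_sum fun j _ => ?_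
            refine mul_le_mul_of_nonneg_left ?_ (abs_nonneg _)
            refine le_trans ?_ (le_max_left _ _)
            calc |(g.mulVec fun i => (p i : ℝ)) j| ≤ ‖g.mulVec fun i => (p i : ℝ)‖ := by
                  rw [← Real.norm_eq_abs]; exact norm_le_pi_norm _ j
              _ ≤ C := hvC
        _ ≤ M := by
            rw [hM, ← Finset.sum_mul]
            refine mul_le_mul_of_nonneg_right ?_ (le_max_right _ _)
            exact Finset.single_le_sum (f := fun i' => ∑ j', |h i' j'|)
              (fun _ _ => Finset.sum_nonneg fun _ _ => abs_nonneg _) (Finset.mem_univ i)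
    have h2 : |(p i : ℝ)| ≤ (⌈M⌉ : ℝ) := h1.trans (Int.le_ceil M)
    exact_mod_cast h2
  have hfin : ({p : Fin k → ℤ | ∀ i, |p i| ≤ ⌈M⌉}).Finite := by
    refine Set.Finite.subset (Set.Finite.pi (fun _ : Fin k => Set.finite_Icc (-⌈M⌉) ⌈M⌉)) ?_
    intro p hp i _
    exact mem_Icc.mpr (abs_le.mp (hp i))
  refine Set.Finite.subset (hfin.image fun p => g.mulVec fun i => (p i : ℝ)) ?_
  intro v hv
  obtain ⟨p, hp1, hp2⟩ := key v hv
  exact ⟨p, hp1, hp2.symm⟩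

lemma mink (k : ℕ) (g : Matrix (Fin k) (Fin k) ℝ) (hg : |g.det| = 1) (c : Fin k → ℝ)
    (hc : ∀ i, 0 < c i) (hprod : 1 < ∏ i, c i) :
    ∃ p : Fin k → ℤ, (g.mulVec fun i => (p i : ℝ)) ≠ 0 ∧
      ∀ i, |(g.mulVec fun i => (p i : ℝ)) i| ≤ c i := by
  have hdet : IsUnit g.det := unit_det g hg
  have inv : Invertible g := g.invertibleOfIsUnitDet hdet
  set b : Module.Basis (Fin k) ℝ (Fin k → ℝ) := (Pi.basisFun ℝ (Fin k)).map (g.toLinearEquiv' inv) with hb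
  have hbfun : ∀ i j, b i j = g j i := by
    intro i j
    simp [hb, Matrix.toLinearEquiv', Matrix.mulVec, dotProduct, Pi.single_apply,
      Finset.sum_ite_eq]
  have hvol : volume (ZSpan.fundamentalDomain b) = 1 := by
    rw [ZSpan.volume_fundamentalDomain]
    have : (Matrix.of ⇑b) = g.transpose := by
      ext i j; exact hbfun i j
    rw [this, Matrix.det_transpose, hg, ENNReal.ofReal_one]
  set s : Set (Fin k → ℝ) := Set.pi univ fun i => Icc (-(c i)) (c i) with hs
  have fund := ZSpan.isAddFundamentalDomain' b volume
  have h_symm : ∀ x ∈ s, -x ∈ s := by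
    intro x hx i _
    have := hx i (mem_univ i)
    simp only [mem_Icc, Pi.neg_apply] at this ⊢
    constructor <;> [linarith [this.2]; linarith [this.1]]
  have h_conv : Convex ℝ s := convex_pi fun i _ => convex_Icc _ _
  have hvols : volume s = ENNReal.ofReal (∏ i, (2 * c i)) := by
    rw [hs, volume_pi_pi]
    simp_rw [Real.volume_Icc]
    rw [← ENNReal.ofReal_prod_of_nonneg (fun i _ => by linarith [hc i])]
    congr 1
    exact Finset.prod_congr rfl fun i _ => by ring
  have hlt : volume (ZSpan.fundamentalDomain b) * 2 ^ (Module.finrank ℝ (Fin k → ℝ)) < volume s := by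
    rw [hvol, hvols, one_mul, Module.finrank_fin_fun]
    have h2 : (2 : ℝ≥0∞) ^ k = ENNReal.ofReal ((2:ℝ) ^ k) := by
      rw [ENNReal.ofReal_pow (by norm_num)]; norm_num
    rw [h2, ENNReal.ofReal_lt_ofReal_iff]
    · calc (2:ℝ)^k = (∏ _i : Fin k, (2:ℝ)) * 1 := by
            rw [Finset.prod_const, mul_one]; congr 1; simp
        _ < (∏ _i : Fin k, (2:ℝ)) * ∏ i, c i := by
            apply mul_lt_mul_of_pos_left hprod
            positivity
        _ = ∏ i, (2 * c i) := by rw [← Finset.prod_mul_distrib]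
    · have : (0:ℝ) < ∏ i, (2 * c i) := Finset.prod_pos fun i _ => by linarith [hc i]
      linarith
  have : Countable (Submodule.span ℤ (Set.range ⇑b)).toAddSubgroup :=
    (inferInstance : Countable (Submodule.span ℤ (Set.range ⇑b)))
  obtain ⟨x, hx0, hxs⟩ := exists_ne_zero_mem_lattice_of_measure_mul_two_pow_lt_measure
    fund h_symm h_conv hlt
  have hmem : (x : Fin k → ℝ) ∈ Submodule.span ℤ (Set.range ⇑b) := x.2
  rw [Submodule.mem_span_range_iff_exists_fun] at hmem
  obtain ⟨p, hp⟩ := hmem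
  have hxe : (x : Fin k → ℝ) = g.mulVec fun i => (p i : ℝ) := by
    funext j
    rw [← hp]
    simp only [Finset.sum_apply, Pi.smul_apply, Matrix.mulVec, dotProduct]
    refine Finset.sum_congr rfl fun i _ => ?_
    rw [hbfun i j, zsmul_eq_mul]
    ring
  refine ⟨p, ?_, ?_⟩
  · rw [← hxe]
    simpa using hx0
  · intro i
    rw [← hxe]
    have := hxs i (mem_univ i)
    rw [mem_Icc] at this
    exact abs_le.mpr this

lemma lam_surj (m n : ℕ) (hm : 1 ≤ m) (t₀ : ℝ) (r : ℝ → ℝ)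
    (hlaminf : Tendsto (fun t => t - n * r t) atTop atTop)
    (hL : MonotoneOn (fun t => t + m * r t) (Ici t₀))
    (c : ℝ) (hc : t₀ - n * r t₀ ≤ c) :
    ∃ t, t₀ ≤ t ∧ t - n * r t = c := by
  have hm0 : (0:ℝ) < m := by exact_mod_cast hm
  set K : ℝ := (m + n) / m with hK
  have hK0 : 0 < K := by positivity
  have lip : ∀ s t : ℝ, t₀ ≤ s → s ≤ t → t - n * r t ≤ (s - n * r s) + K * (t - s) := by
    intro s t hs hst
    have hLle : s + m * r s ≤ t + m * r t := hL hs (hs.trans hst) hst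
    rw [hK]
    rw [div_mul_eq_mul_div, ← sub_nonneg]
    have : ((s - n * r s) + (↑m + ↑n) * (t - s) / ↑m) - (t - n * r t)
        = ((t + m * r t) - (s + m * r s)) * (n / m) := by
      field_simp
      ring
    rw [this]
    have : (0:ℝ) ≤ n / m := by positivity
    nlinarith
  set S : Set ℝ := {t | t₀ ≤ t ∧ t - n * r t ≤ c} with hS
  have hne : S.Nonempty := ⟨t₀, le_refl _, hc⟩
  obtain ⟨t₁, ht₁⟩ := (hlaminf.eventually (eventually_gt_atTop c)).exists_forall_of_atTop
  have hbdd : BddAbove S := by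
    refine ⟨t₁, fun t ht => ?_⟩
    by_contra hlt
    push_neg at hlt
    exact absurd ht.2 (not_le.mpr (ht₁ t hlt.le))
  set τ := sSup S with hτ
  have hτ₀ : t₀ ≤ τ := le_csSup hbdd (⟨le_refl t₀, hc⟩ : t₀ ∈ S)
  have hle : τ - n * r τ ≤ c := by
    refine le_of_forall_pos_le_add fun ε hε => ?_
    have hεK : 0 < ε / K := div_pos hε hK0
    obtain ⟨t, htS, hlt⟩ := exists_lt_of_lt_csSup hne (show τ - ε / K < τ by linarith)
    have htτ : t ≤ τ := le_csSup hbdd htS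
    have h1 := lip t τ htS.1 htτ
    have h2 : K * (τ - t) ≤ ε := by
      have : K * (τ - t) ≤ K * (ε / K) :=
        mul_le_mul_of_nonneg_left (by linarith) hK0.le
      rwa [mul_div_cancel₀ _ (ne_of_gt hK0)] at this
    linarith [htS.2]
  have hge : c ≤ τ - n * r τ := by
    by_contra hlt
    push_neg at hlt
    set δ := (c - (τ - n * r τ)) / K with hδ
    have hδ0 : 0 < δ := div_pos (by linarith) hK0
    have hmem : τ + δ ∈ S := by
      refine ⟨by linarith, ?_⟩
      have h1 := lip τ (τ + δ) hτ₀ (by linarith)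
      have h2 : K * (τ + δ - τ) = c - (τ - n * r τ) := by
        rw [show τ + δ - τ = δ by ring, hδ, mul_div_cancel₀ _ (ne_of_gt hK0)]
      linarith
    have := le_csSup hbdd hmem
    linarith
  exact ⟨τ, hτ₀, le_antisymm hle hge⟩

lemma normsplit (m n : ℕ) (v : Fin (m + n) → ℝ) (c : ℝ) (hc : 0 ≤ c) :
    ‖v‖ ≤ c ↔ ‖fun i : Fin m => v (Fin.castAdd n i)‖ ≤ c ∧
      ‖fun j : Fin n => v (Fin.natAdd m j)‖ ≤ c := by
  rw [pi_norm_le_iff_of_nonneg hc, pi_norm_le_iff_of_nonneg hc, pi_norm_le_iff_of_nonneg hc]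
  constructor
  · intro h
    exact ⟨fun i => h _, fun j => h _⟩
  · rintro ⟨h1, h2⟩ i
    refine Fin.addCases (fun i => h1 i) (fun j => h2 j) i

lemma min_vec (k : ℕ) (hk : 0 < k) (g : Matrix (Fin k) (Fin k) ℝ) (hdet : IsUnit g.det)
    (d : Fin k → ℝ) (hd : ∀ i, 0 < d i) :
    ∃ w : Fin k → ℝ, (∃ p : Fin k → ℤ, w = g.mulVec fun i => (p i : ℝ)) ∧ w ≠ 0 ∧
      IsGreatest {z : ℝ | ∃ v, (∃ p : Fin k → ℤ, v = g.mulVec fun i => (p i : ℝ)) ∧ v ≠ 0 ∧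
          z = -Real.log ‖fun i => d i * v i‖}
        (-Real.log ‖fun i => d i * w i‖) := by
  classical
  have hFpos : ∀ v : Fin k → ℝ, v ≠ 0 → 0 < ‖fun i => d i * v i‖ := by
    intro v hv
    rw [norm_pos_iff]
    intro h
    apply hv
    funext i
    have := congrFun h i
    simp only [Pi.zero_apply] at this ⊢
    rcases mul_eq_zero.mp this with h' | h'
    · exact absurd h' (ne_of_gt (hd i))
    · exact h'
  set v₁ : Fin k → ℝ := g.mulVec (fun i => ((1 : ℤ) : ℝ)) with hv₁
  have hv₁P : ∃ p : Fin k → ℤ, v₁ = g.mulVec fun i => (p i : ℝ) := ⟨fun _ => 1, rfl⟩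
  have hv₁0 : v₁ ≠ 0 := by
    intro h
    have hinj : ∀ x : Fin k → ℝ, g.mulVec x = 0 → x = 0 := by
      intro x hx
      have : g⁻¹.mulVec (g.mulVec x) = x := by
        rw [Matrix.mulVec_mulVec, Matrix.nonsing_inv_mul g hdet, Matrix.one_mulVec]
      rw [hx, Matrix.mulVec_zero] at this
      exact this.symm
    have := hinj _ h
    have := congrFun this ⟨0, hk⟩
    norm_num at this
  set c₁ : ℝ := ‖fun i => d i * v₁ i‖ with hc₁
  have hc₁pos : 0 < c₁ := hFpos v₁ hv₁0
  obtain ⟨i₀⟩ : Nonempty (Fin k) := ⟨⟨0, hk⟩⟩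
  set D : ℝ := Finset.univ.sup' ⟨i₀, Finset.mem_univ i₀⟩ fun i => (d i)⁻¹ with hD
  have hDpos : 0 < D := by
    refine lt_of_lt_of_le (inv_pos.mpr (hd i₀)) ?_
    exact Finset.le_sup' (f := fun i => (d i)⁻¹) (Finset.mem_univ i₀)
  have hbound : ∀ v : Fin k → ℝ, ‖fun i => d i * v i‖ ≤ c₁ → ‖v‖ ≤ D * c₁ := by
    intro v hv
    rw [pi_norm_le_iff_of_nonneg (by positivity)]
    intro i
    have h1 : ‖v i‖ = (d i)⁻¹ * ‖d i * v i‖ := by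
      rw [Real.norm_eq_abs, Real.norm_eq_abs, abs_mul, abs_of_pos (hd i),
        inv_mul_cancel_left₀ (ne_of_gt (hd i))]
    rw [h1]
    have h2 : ‖d i * v i‖ ≤ c₁ := le_trans (norm_le_pi_norm (fun i => d i * v i) i) hv
    exact mul_le_mul (Finset.le_sup' (f := fun i => (d i)⁻¹) (Finset.mem_univ i)) h2
      (norm_nonneg _) hDpos.le
  set T : Set (Fin k → ℝ) := {v | (∃ p : Fin k → ℤ, v = g.mulVec fun i => (p i : ℝ)) ∧ v ≠ 0 ∧
    ‖fun i => d i * v i‖ ≤ c₁} with hT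
  have hTfin : T.Finite := by
    refine Set.Finite.subset (lat_finite k g hdet (D * c₁)) ?_
    rintro v ⟨hP, hv0, hle⟩
    exact ⟨hP, hbound v hle⟩
  have hTne : T.Nonempty := ⟨v₁, hv₁P, hv₁0, le_refl _⟩
  obtain ⟨w, hwT, hwmin⟩ := Set.exists_min_image T (fun v => ‖fun i => d i * v i‖) hTfin hTne
  refine ⟨w, hwT.1, hwT.2.1, ⟨w, hwT.1, hwT.2.1, rfl⟩, ?_⟩
  rintro z ⟨v, hvP, hv0, rfl⟩
  have hkey : ‖fun i => d i * w i‖ ≤ ‖fun i => d i * v i‖ := by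
    by_cases hle : ‖fun i => d i * v i‖ ≤ c₁
    · exact hwmin v ⟨hvP, hv0, hle⟩
    · push_neg at hle
      exact le_trans (hwT.2.2) hle.le
  have := Real.log_le_log (hFpos w hwT.2.1) hkey
  linarith

end DaniAux

open Filter Set

/-- Theorem 8.5: the Dani correspondence between ψ-approximability of unimodular
lattices and excursions of the diagonal flow on the space of lattices. -/
theorem stmt_12 (m n : ℕ) (hm : 1 ≤ m) (hn : 1 ≤ n) (x₀ t₀ : ℝ)
    (ψ r : ℝ → ℝ)
    (hcont : ContinuousOn ψ (Ici x₀)) (hanti : AntitoneOn ψ (Ici x₀))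
    (hpos : ∀ x ∈ Ici x₀, 0 < ψ x)
    (hlam : StrictMonoOn (fun t => t - n * r t) (Ici t₀))
    (hlaminf : Tendsto (fun t => t - n * r t) atTop atTop)
    (hL : MonotoneOn (fun t => t + m * r t) (Ici t₀))
    (hx₀ : x₀ = Real.exp (t₀ - n * r t₀))
    (heq : ∀ t ∈ Ici t₀, ψ (Real.exp (t - n * r t)) = Real.exp (-t - m * r t))
    (g : Matrix (Fin (m + n)) (Fin (m + n)) ℝ) (hg : |g.det| = 1)
    (Λ : Set (Fin (m + n) → ℝ))
    (hΛ : Λ = {v | ∃ p : Fin (m + n) → ℤ, v = g.mulVec fun i => (p i : ℝ)}) :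
    (∀ R : ℝ, ∃ v ∈ Λ,
      R ≤ ‖fun j : Fin n => v (Fin.natAdd m j)‖ ∧
      ‖fun i : Fin m => v (Fin.castAdd n i)‖ ^ m
        ≤ ψ (‖fun j : Fin n => v (Fin.natAdd m j)‖ ^ n)) ↔
    (∀ T : ℝ, ∃ t : ℝ, T ≤ t ∧ 0 < t ∧
      r t ≤ sSup {z : ℝ | ∃ v ∈ Λ, v ≠ 0 ∧
        z = -Real.log ‖fun i : Fin (m + n) =>
          (if (i : ℕ) < m then Real.exp (t / m) else Real.exp (-t / n)) * v i‖}) := by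
  subst hΛ
  have hm0 : (0:ℝ) < m := by exact_mod_cast hm
  have hn0 : (0:ℝ) < n := by exact_mod_cast hn
  have hmne : m ≠ 0 := by omega
  have hnne : n ≠ 0 := by omega
  have hk : 0 < m + n := by omega
  have hdet : IsUnit g.det := unit_det g hg
  have hx₀pos : 0 < x₀ := hx₀ ▸ Real.exp_pos _
  have hlam₀ : t₀ - n * r t₀ = Real.log x₀ := by rw [hx₀, Real.log_exp]
  -- coefficient function of the flow
  set d : ℝ → Fin (m + n) → ℝ :=
    fun t i => if (i : ℕ) < m then Real.exp (t / m) else Real.exp (-t / n) with hd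
  have hdpos : ∀ t i, 0 < d t i := by
    intro t i
    rw [hd]
    dsimp only
    split_ifs <;> exact Real.exp_pos _
  -- norms of components of the flowed vector
  have hFA : ∀ (t : ℝ) (v : Fin (m + n) → ℝ),
      (fun i : Fin m => (fun i : Fin (m+n) => d t i * v i) (Fin.castAdd n i))
        = Real.exp (t / m) • fun i : Fin m => v (Fin.castAdd n i) := by
    intro t v
    funext i
    have : ((Fin.castAdd n i : Fin (m+n)) : ℕ) < m := by
      rw [Fin.coe_castAdd]; exact i.isLt
    simp only [hd, Pi.smul_apply, smul_eq_mul, if_pos this]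
  have hFB : ∀ (t : ℝ) (v : Fin (m + n) → ℝ),
      (fun j : Fin n => (fun i : Fin (m+n) => d t i * v i) (Fin.natAdd m j))
        = Real.exp (-t / n) • fun j : Fin n => v (Fin.natAdd m j) := by
    intro t v
    funext j
    have : ¬ ((Fin.natAdd m j : Fin (m+n)) : ℕ) < m := by
      rw [Fin.coe_natAdd]; omega
    simp only [hd, Pi.smul_apply, smul_eq_mul, if_neg this]
  have hFsplit : ∀ (t : ℝ) (v : Fin (m + n) → ℝ) (c : ℝ), 0 ≤ c →
      (‖fun i : Fin (m+n) => d t i * v i‖ ≤ c ↔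
        Real.exp (t / m) * ‖fun i : Fin m => v (Fin.castAdd n i)‖ ≤ c ∧
        Real.exp (-t / n) * ‖fun j : Fin n => v (Fin.natAdd m j)‖ ≤ c) := by
    intro t v c hc
    rw [normsplit m n _ c hc, hFA, hFB, norm_smul, norm_smul, Real.norm_eq_abs,
      Real.norm_eq_abs, abs_of_pos (Real.exp_pos _), abs_of_pos (Real.exp_pos _)]
  have hFpos : ∀ (t : ℝ) (v : Fin (m + n) → ℝ), v ≠ 0 →
      0 < ‖fun i : Fin (m+n) => d t i * v i‖ := by
    intro t v hv
    rw [norm_pos_iff]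
    intro h
    apply hv
    funext i
    have := congrFun h i
    simp only [Pi.zero_apply] at this ⊢
    rcases mul_eq_zero.mp this with h' | h'
    · exact absurd h' (ne_of_gt (hdpos t i))
    · exact h'
  -- multiples stay in the lattice
  have hmul : ∀ (N : ℤ) (p : Fin (m+n) → ℤ),
      (N : ℝ) • (g.mulVec fun i => (p i : ℝ)) = g.mulVec fun i => ((N * p i : ℤ) : ℝ) := by
    intro N p
    have : (fun i => ((N * p i : ℤ) : ℝ)) = (N : ℝ) • fun i => (p i : ℝ) := by
      funext i
      push_cast
      simp [Pi.smul_apply]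
    rw [this, Matrix.mulVec_smul]
  constructor
  · -- LHS → RHS
    intro hLHS T
    set T' : ℝ := max T (max t₀ 0) + 1 with hT'
    have hT't₀ : t₀ ≤ T' := by
      have : t₀ ≤ max T (max t₀ 0) := le_trans (le_max_left _ _) (le_max_right _ _)
      linarith
    set R : ℝ := max 1 (max x₀ (Real.exp (T' - n * r T'))) with hR
    obtain ⟨v, hvΛ, hvR, hvψ⟩ := hLHS R
    set bv : ℝ := ‖fun j : Fin n => v (Fin.natAdd m j)‖ with hbv
    have hbv1 : 1 ≤ bv := le_trans (le_max_left _ _) hvR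
    have hxlarge : Real.exp (T' - n * r T') ≤ bv ^ n := by
      calc Real.exp (T' - n * r T') ≤ R := le_trans (le_max_right _ _) (le_max_right _ _)
        _ ≤ bv := hvR
        _ ≤ bv ^ n := le_self_pow₀ hbv1 hnne
    have hxx₀ : x₀ ≤ bv ^ n := by
      calc x₀ ≤ R := le_trans (le_max_left _ _) (le_max_right _ _)
        _ ≤ bv := hvR
        _ ≤ bv ^ n := le_self_pow₀ hbv1 hnne
    have hxpos : 0 < bv ^ n := lt_of_lt_of_le hx₀pos hxx₀
    obtain ⟨t, ht₀, hlamt⟩ := lam_surj m n hm t₀ r hlaminf hL (Real.log (bv ^ n))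
      (by rw [hlam₀]; exact Real.log_le_log hx₀pos hxx₀)
    have hexplam : Real.exp (t - n * r t) = bv ^ n := by rw [hlamt, Real.exp_log hxpos]
    have htT' : T' ≤ t := by
      by_contra hlt
      push_neg at hlt
      have h1 : t - n * r t < T' - n * r T' := hlam (mem_Ici.mpr ht₀) (mem_Ici.mpr hT't₀) hlt
      have h2 : T' - n * r T' ≤ Real.log (bv ^ n) := by
        rw [← Real.log_exp (T' - n * r T')]
        exact Real.log_le_log (Real.exp_pos _) hxlarge
      rw [hlamt] at h1
      linarith
    have hv0 : v ≠ 0 := by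
      rintro rfl
      have : bv = 0 := by
        rw [hbv]
        exact norm_zero
      linarith
    -- the two inequalities
    have hψx : ψ (bv ^ n) = Real.exp (-t - m * r t) := by
      rw [← hexplam]
      exact heq t (mem_Ici.mpr ht₀)
    have hAle : ‖fun i : Fin m => v (Fin.castAdd n i)‖ ≤ Real.exp ((-t - m * r t)/m) := by
      refine le_of_pow_le_pow_left₀ hmne (le_of_lt (Real.exp_pos _)) ?_
      rw [← Real.exp_nat_mul]
      have : (m : ℝ) * ((-t - m * r t)/m) = -t - m * r t := by field_simp
      rw [this, ← hψx]
      exact hvψ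
    have hBle : bv ≤ Real.exp ((t - n * r t)/n) := by
      refine le_of_pow_le_pow_left₀ hnne (le_of_lt (Real.exp_pos _)) ?_
      rw [← Real.exp_nat_mul]
      have : (n : ℝ) * ((t - n * r t)/n) = t - n * r t := by field_simp
      rw [this, hexplam]
    have hFle : ‖fun i : Fin (m+n) => d t i * v i‖ ≤ Real.exp (-r t) := by
      rw [hFsplit t v _ (le_of_lt (Real.exp_pos _))]
      constructor
      · calc Real.exp (t/m) * ‖fun i : Fin m => v (Fin.castAdd n i)‖
            ≤ Real.exp (t/m) * Real.exp ((-t - m * r t)/m) :=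
              mul_le_mul_of_nonneg_left hAle (le_of_lt (Real.exp_pos _))
          _ = Real.exp (-r t) := by
              rw [← Real.exp_add]
              congr 1
              field_simp
              ring
      · calc Real.exp (-t/n) * bv ≤ Real.exp (-t/n) * Real.exp ((t - n * r t)/n) :=
              mul_le_mul_of_nonneg_left hBle (le_of_lt (Real.exp_pos _))
          _ = Real.exp (-r t) := by
              rw [← Real.exp_add]
              congr 1
              field_simp
              ring
    have hrz : r t ≤ -Real.log ‖fun i : Fin (m+n) => d t i * v i‖ := by
      have h1 : Real.log ‖fun i : Fin (m+n) => d t i * v i‖ ≤ -r t := by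
        rw [← Real.log_exp (-r t)]
        exact Real.log_le_log (hFpos t v hv0) hFle
      linarith
    obtain ⟨w, hwP, hw0, hgr⟩ := min_vec (m+n) hk g hdet (d t) (hdpos t)
    refine ⟨t, ?_, ?_, ?_⟩
    · have : T < T' := by
        have : T ≤ max T (max t₀ 0) := le_max_left _ _
        linarith
      linarith
    · have : (0:ℝ) < T' := by
        have : (0:ℝ) ≤ max T (max t₀ 0) := le_trans (le_max_right t₀ 0) (le_max_right T (max t₀ 0))
        linarith
      linarith
    · exact le_trans hrz (le_csSup hgr.bddAbove ⟨v, hvΛ, hv0, rfl⟩)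
  · -- RHS → LHS
    intro hRHS R₀
    set R : ℝ := max R₀ (max 1 x₀) with hR
    have hR1 : 1 ≤ R := le_trans (le_max_left _ _) (le_max_right _ _)
    have hRx₀ : x₀ ≤ R := le_trans (le_max_right _ _) (le_max_right _ _)
    have hRR₀ : R₀ ≤ R := le_max_left _ _
    have hpow : ∀ y : ℝ, R ≤ y → x₀ ≤ y ^ n := by
      intro y hy
      calc x₀ ≤ R := hRx₀
        _ ≤ y := hy
        _ ≤ y ^ n := le_self_pow₀ (le_trans hR1 hy) hnne
    by_cases hcase : ∃ v : Fin (m+n) → ℝ,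
        (∃ p : Fin (m+n) → ℤ, v = g.mulVec fun i => (p i : ℝ)) ∧ v ≠ 0 ∧
        (fun i : Fin m => v (Fin.castAdd n i)) = 0
    · -- there is a nonzero vector with vanishing first block
      obtain ⟨v, ⟨p, hp⟩, hv0, hA0⟩ := hcase
      have hB0 : (fun j : Fin n => v (Fin.natAdd m j)) ≠ 0 := by
        intro hB
        apply hv0
        funext i
        refine Fin.addCases (fun i => ?_) (fun j => ?_) i
        · have := congrFun hA0 i
          simpa using this
        · have := congrFun hB j
          simpa using this
      have hBpos : 0 < ‖fun j : Fin n => v (Fin.natAdd m j)‖ := norm_pos_iff.mpr hB0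
      obtain ⟨N, hN⟩ := exists_nat_gt (R / ‖fun j : Fin n => v (Fin.natAdd m j)‖)
      set w : Fin (m+n) → ℝ := ((N : ℤ) : ℝ) • v with hw
      have hwΛ : ∃ q : Fin (m+n) → ℤ, w = g.mulVec fun i => (q i : ℝ) := by
        refine ⟨fun i => (N : ℤ) * p i, ?_⟩
        rw [hw, hp, hmul]
      have hwB : (fun j : Fin n => w (Fin.natAdd m j))
          = ((N : ℤ) : ℝ) • fun j : Fin n => v (Fin.natAdd m j) := rfl
      have hwBnorm : ‖fun j : Fin n => w (Fin.natAdd m j)‖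
          = (N : ℝ) * ‖fun j : Fin n => v (Fin.natAdd m j)‖ := by
        rw [hwB, norm_smul, Real.norm_eq_abs]
        congr 1
        push_cast
        exact abs_of_nonneg (Nat.cast_nonneg N)
      have hRw : R ≤ ‖fun j : Fin n => w (Fin.natAdd m j)‖ := by
        rw [hwBnorm]
        rw [div_lt_iff₀ hBpos] at hN
        exact hN.le
      have hwA : (fun i : Fin m => w (Fin.castAdd n i)) = 0 := by
        funext i
        have := congrFun hA0 i
        simp only [hw, Pi.smul_apply, Pi.zero_apply] at this ⊢
        rw [this, smul_zero]
      refine ⟨w, hwΛ, le_trans hRR₀ hRw, ?_⟩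
      rw [hwA]
      rw [norm_zero, zero_pow hmne]
      exact le_of_lt (hpos _ (mem_Ici.mpr (hpow _ hRw)))
    · -- all nonzero lattice vectors have nonvanishing first block
      push_neg at hcase
      by_cases hLb : ∃ B₀ : ℝ, ∀ t ∈ Ici t₀, t + m * r t ≤ B₀
      · -- L bounded: ψ is bounded below, use Minkowski directly
        obtain ⟨B₀, hB₀⟩ := hLb
        have hψc : ∀ x ∈ Ici x₀, Real.exp (-B₀) ≤ ψ x := by
          intro x hx
          have hxpos : 0 < x := lt_of_lt_of_le hx₀pos hx
          obtain ⟨t, ht₀, hlamt⟩ := lam_surj m n hm t₀ r hlaminf hL (Real.log x)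
            (by rw [hlam₀]; exact Real.log_le_log hx₀pos hx)
          have : ψ x = Real.exp (-t - m * r t) := by
            rw [← heq t (mem_Ici.mpr ht₀), hlamt, Real.exp_log hxpos]
          rw [this]
          apply Real.exp_le_exp.mpr
          have := hB₀ t (mem_Ici.mpr ht₀)
          linarith
        set cm : ℝ := Real.exp (-B₀ / m) with hcm
        have hcm0 : 0 < cm := Real.exp_pos _
        have hcmpow : cm ^ m = Real.exp (-B₀) := by
          rw [hcm, ← Real.exp_nat_mul]
          congr 1
          field_simp
        set S : Set (Fin (m+n) → ℝ) := {v | (∃ p : Fin (m+n) → ℤ, v = g.mulVec fun i => (p i : ℝ))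
          ∧ v ≠ 0 ∧ ‖fun i : Fin m => v (Fin.castAdd n i)‖ ≤ cm
          ∧ ‖fun j : Fin n => v (Fin.natAdd m j)‖ ≤ R} with hS
        have hSfin : S.Finite := by
          refine Set.Finite.subset (lat_finite (m+n) g hdet (max cm R)) ?_
          rintro v ⟨hP, hv0, hA, hB⟩
          refine ⟨hP, ?_⟩
          rw [normsplit m n v _ (le_trans (le_of_lt hcm0) (le_max_left _ _))]
          exact ⟨le_trans hA (le_max_left _ _), le_trans hB (le_max_right _ _)⟩
        have hex : ∃ ε : ℝ, 0 < ε ∧ ε ≤ cm ∧ ∀ v ∈ S, ε < ‖fun i : Fin m => v (Fin.castAdd n i)‖ := by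
          have hfin2 : (insert cm ((fun v => ‖fun i : Fin m => v (Fin.castAdd n i)‖) '' S)).Finite :=
            Set.Finite.insert _ (hSfin.image _)
          obtain ⟨μ, hμT, hμmin⟩ := Set.exists_min_image _ id hfin2 ⟨cm, Set.mem_insert _ _⟩
          have hμpos : 0 < μ := by
            rcases hμT with h | ⟨v, hvS, rfl⟩
            · rw [h]; exact hcm0
            · exact norm_pos_iff.mpr (hcase v hvS.1 hvS.2.1)
          refine ⟨μ / 2, by linarith, ?_, ?_⟩
          · have := hμmin cm (Set.mem_insert _ _)
            simp only [id] at this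
            linarith
          · intro v hvS
            have := hμmin _ (Set.mem_insert_of_mem _ ⟨v, hvS, rfl⟩)
            simp only [id] at this
            linarith
        obtain ⟨ε, hε0, hεc, hεS⟩ := hex
        set β : ℝ := max 1 (2 / ε ^ m) with hβ
        have hβ0 : 0 < β := lt_of_lt_of_le one_pos (le_max_left _ _)
        have hprodεβ : 1 < ε ^ m * β ^ n := by
          have h1 : 2 / ε ^ m ≤ β ^ n := le_trans (le_max_right _ _) (le_self_pow₀ (le_max_left _ _) hnne)
          have h2 : ε ^ m * (2 / ε ^ m) ≤ ε ^ m * β ^ n :=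
            mul_le_mul_of_nonneg_left h1 (by positivity)
          rw [mul_div_cancel₀ _ (by positivity : (ε:ℝ) ^ m ≠ 0)] at h2
          linarith
        have hprodPi : 1 < ∏ i : Fin (m+n), (if (i : ℕ) < m then ε else β) := by
          have : ∏ i : Fin (m+n), (if (i : ℕ) < m then ε else β) = ε ^ m * β ^ n := by
            rw [Fin.prod_univ_add]
            congr 1
            · rw [Finset.prod_congr rfl (fun i _ => if_pos (by rw [Fin.coe_castAdd]; exact i.isLt)),
                Finset.prod_const]
              simp
            · rw [Finset.prod_congr rfl (fun i _ => if_neg (by rw [Fin.coe_natAdd]; omega)),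
                Finset.prod_const]
              simp
          rw [this]
          exact hprodεβ
        obtain ⟨p, hp0, hpbd⟩ := mink (m+n) g hg (fun i => if (i : ℕ) < m then ε else β)
          (fun i => by split_ifs <;> [exact hε0; exact hβ0]) hprodPi
        set w : Fin (m+n) → ℝ := g.mulVec fun i => (p i : ℝ) with hwdef
        have hAw : ‖fun i : Fin m => w (Fin.castAdd n i)‖ ≤ ε := by
          rw [pi_norm_le_iff_of_nonneg hε0.le]
          intro i
          have := hpbd (Fin.castAdd n i)
          rw [if_pos (by rw [Fin.coe_castAdd]; exact i.isLt)] at this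
          exact this
        have hBwR : R < ‖fun j : Fin n => w (Fin.natAdd m j)‖ := by
          by_contra hcon
          push_neg at hcon
          have hwS : w ∈ S := ⟨⟨p, rfl⟩, hp0, hAw.trans hεc, hcon⟩
          exact absurd hAw (not_le.mpr (hεS w hwS))
        refine ⟨w, ⟨p, rfl⟩, le_trans hRR₀ hBwR.le, ?_⟩
        calc ‖fun i : Fin m => w (Fin.castAdd n i)‖ ^ m ≤ ε ^ m :=
              pow_le_pow_left₀ (norm_nonneg _) hAw m
          _ ≤ cm ^ m := pow_le_pow_left₀ hε0.le hεc m
          _ = Real.exp (-B₀) := hcmpow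
          _ ≤ ψ (‖fun j : Fin n => w (Fin.natAdd m j)‖ ^ n) :=
              hψc _ (mem_Ici.mpr (hpow _ hBwR.le))
      · -- L unbounded: use the excursion hypothesis
        push_neg at hLb
        set C₁ : ℝ := Real.exp (-(t₀ + m * r t₀) / m) with hC₁
        have hC₁0 : 0 < C₁ := Real.exp_pos _
        set S : Set (Fin (m+n) → ℝ) := {v | (∃ p : Fin (m+n) → ℤ, v = g.mulVec fun i => (p i : ℝ))
          ∧ v ≠ 0 ∧ ‖fun i : Fin m => v (Fin.castAdd n i)‖ ≤ C₁
          ∧ ‖fun j : Fin n => v (Fin.natAdd m j)‖ ≤ R} with hS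
        have hSfin : S.Finite := by
          refine Set.Finite.subset (lat_finite (m+n) g hdet (max C₁ R)) ?_
          rintro v ⟨hP, hv0, hA, hB⟩
          refine ⟨hP, ?_⟩
          rw [normsplit m n v _ (le_trans (le_of_lt hC₁0) (le_max_left _ _))]
          exact ⟨le_trans hA (le_max_left _ _), le_trans hB (le_max_right _ _)⟩
        have hex : ∃ ρ : ℝ, 0 < ρ ∧ ∀ v ∈ S, ρ < ‖fun i : Fin m => v (Fin.castAdd n i)‖ ^ m := by
          have hfin2 : (insert (1:ℝ) ((fun v => ‖fun i : Fin m => v (Fin.castAdd n i)‖ ^ m) '' S)).Finite :=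
            Set.Finite.insert _ (hSfin.image _)
          obtain ⟨μ, hμT, hμmin⟩ := Set.exists_min_image _ id hfin2 ⟨1, Set.mem_insert _ _⟩
          have hμpos : 0 < μ := by
            rcases hμT with h | ⟨v, hvS, rfl⟩
            · rw [h]; exact one_pos
            · exact pow_pos (norm_pos_iff.mpr (hcase v hvS.1 hvS.2.1)) m
          refine ⟨μ / 2, by linarith, ?_⟩
          intro v hvS
          have := hμmin _ (Set.mem_insert_of_mem _ ⟨v, hvS, rfl⟩)
          simp only [id] at this
          linarith
        obtain ⟨ρ, hρ0, hρS⟩ := hex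
        obtain ⟨t₂, ht₂Ici, ht₂⟩ := hLb (-Real.log ρ)
        obtain ⟨t, htT, ht0, htsSup⟩ := hRHS (max t₂ t₀)
        have htt₂ : t₂ ≤ t := le_trans (le_max_left _ _) htT
        have htt₀ : t₀ ≤ t := le_trans (le_max_right _ _) htT
        have hLt : -Real.log ρ < t + m * r t :=
          lt_of_lt_of_le ht₂ (hL ht₂Ici (mem_Ici.mpr htt₀) htt₂)
        obtain ⟨w, hwP, hw0, hgr⟩ := min_vec (m+n) hk g hdet (d t) (hdpos t)
        have hsup : r t ≤ -Real.log ‖fun i : Fin (m+n) => d t i * w i‖ := by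
          have := hgr.csSup_eq
          exact le_trans htsSup (le_of_eq this)
        have hFw : ‖fun i : Fin (m+n) => d t i * w i‖ ≤ Real.exp (-r t) := by
          have h1 : Real.log ‖fun i : Fin (m+n) => d t i * w i‖ ≤ -r t := by linarith
          calc ‖fun i : Fin (m+n) => d t i * w i‖
              = Real.exp (Real.log ‖fun i : Fin (m+n) => d t i * w i‖) :=
                (Real.exp_log (hFpos t w hw0)).symm
            _ ≤ Real.exp (-r t) := Real.exp_le_exp.mpr h1
        rw [hFsplit t w _ (le_of_lt (Real.exp_pos _))] at hFw
        obtain ⟨hFwA, hFwB⟩ := hFw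
        have hAw : ‖fun i : Fin m => w (Fin.castAdd n i)‖ ≤ Real.exp (-(t + m * r t) / m) := by
          have h1 : ‖fun i : Fin m => w (Fin.castAdd n i)‖ ≤ Real.exp (-r t) / Real.exp (t/m) := by
            rw [le_div_iff₀ (Real.exp_pos _)]
            calc ‖fun i : Fin m => w (Fin.castAdd n i)‖ * Real.exp (t/m)
                = Real.exp (t/m) * ‖fun i : Fin m => w (Fin.castAdd n i)‖ := by ring
              _ ≤ Real.exp (-r t) := hFwA
          calc ‖fun i : Fin m => w (Fin.castAdd n i)‖
              ≤ Real.exp (-r t) / Real.exp (t/m) := h1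
            _ = Real.exp (-(t + m * r t) / m) := by
                rw [← Real.exp_sub]
                congr 1
                field_simp
                ring
        have hAwm : ‖fun i : Fin m => w (Fin.castAdd n i)‖ ^ m ≤ Real.exp (-(t + m * r t)) := by
          calc ‖fun i : Fin m => w (Fin.castAdd n i)‖ ^ m
              ≤ (Real.exp (-(t + m * r t) / m)) ^ m := pow_le_pow_left₀ (norm_nonneg _) hAw m
            _ = Real.exp (-(t + m * r t)) := by
                rw [← Real.exp_nat_mul]
                congr 1
                field_simp
        have hBw : ‖fun j : Fin n => w (Fin.natAdd m j)‖ ≤ Real.exp ((t - n * r t) / n) := by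
          have h1 : ‖fun j : Fin n => w (Fin.natAdd m j)‖ ≤ Real.exp (-r t) / Real.exp (-t/n) := by
            rw [le_div_iff₀ (Real.exp_pos _)]
            calc ‖fun j : Fin n => w (Fin.natAdd m j)‖ * Real.exp (-t/n)
                = Real.exp (-t/n) * ‖fun j : Fin n => w (Fin.natAdd m j)‖ := by ring
              _ ≤ Real.exp (-r t) := hFwB
          calc ‖fun j : Fin n => w (Fin.natAdd m j)‖
              ≤ Real.exp (-r t) / Real.exp (-t/n) := h1
            _ = Real.exp ((t - n * r t) / n) := by
                rw [← Real.exp_sub]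
                congr 1
                field_simp
                ring
        have hBwn : ‖fun j : Fin n => w (Fin.natAdd m j)‖ ^ n ≤ Real.exp (t - n * r t) := by
          calc ‖fun j : Fin n => w (Fin.natAdd m j)‖ ^ n
              ≤ (Real.exp ((t - n * r t) / n)) ^ n := pow_le_pow_left₀ (norm_nonneg _) hBw n
            _ = Real.exp (t - n * r t) := by
                rw [← Real.exp_nat_mul]
                congr 1
                field_simp
        have hBwR : R < ‖fun j : Fin n => w (Fin.natAdd m j)‖ := by
          by_contra hcon
          push_neg at hcon
          have hAwC₁ : ‖fun i : Fin m => w (Fin.castAdd n i)‖ ≤ C₁ := by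
            refine le_trans hAw ?_
            rw [hC₁]
            apply Real.exp_le_exp.mpr
            have : t₀ + m * r t₀ ≤ t + m * r t := hL (mem_Ici.mpr (le_refl t₀)) (mem_Ici.mpr htt₀) htt₀
            have h3 : -(t + m * r t) ≤ -(t₀ + m * r t₀) := by linarith
            exact div_le_div_of_nonneg_right h3 hm0.le
          have hwS : w ∈ S := ⟨hwP, hw0, hAwC₁, hcon⟩
          have h1 : ρ < ‖fun i : Fin m => w (Fin.castAdd n i)‖ ^ m := hρS w hwS
          have h2 : Real.exp (-(t + m * r t)) < ρ := by
            rw [← Real.exp_log hρ0]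
            apply Real.exp_lt_exp.mpr
            linarith
          linarith
        -- conclude
        have hlammono : t₀ - n * r t₀ ≤ t - n * r t := by
          rcases eq_or_lt_of_le htt₀ with h | h
          · rw [← h]
          · exact le_of_lt (hlam (mem_Ici.mpr (le_refl t₀)) (mem_Ici.mpr htt₀) h)
        have hexpx₀ : x₀ ≤ Real.exp (t - n * r t) := by
          rw [hx₀]
          exact Real.exp_le_exp.mpr hlammono
        have hψeq : ψ (Real.exp (t - n * r t)) = Real.exp (-(t + m * r t)) := by
          rw [heq t (mem_Ici.mpr htt₀)]
          congr 1
          ring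
        refine ⟨w, hwP, le_trans hRR₀ hBwR.le, ?_⟩
        calc ‖fun i : Fin m => w (Fin.castAdd n i)‖ ^ m
            ≤ Real.exp (-(t + m * r t)) := hAwm
          _ = ψ (Real.exp (t - n * r t)) := hψeq.symm
          _ ≤ ψ (‖fun j : Fin n => w (Fin.natAdd m j)‖ ^ n) :=
              hanti (mem_Ici.mpr (hpow _ hBwR.le)) (mem_Ici.mpr hexpx₀) hBwn
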